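/- Let $\mu$ be a finite Borel measure in $\mathbb{R}^N$ with compact support $X$ such that $\mathcal{H}^k(X)=0$ for some integer $1\le k\le N$, and let $\phi:X\to\mathbb{R}^k$ be Lipschitz. Then for Lebesgue-almost every linear map $L:\mathbb{R}^N\to\mathbb{R}^k$ there exists a Borel set $X_L\subset X$ of full $\mu$-measure such that $\phi_L=\phi+L$ is injective on $X_L$ and, for every $x\in X_L$ and $\varepsilon>0$, there is $\delta>0$ such that any $y\in X$ with $\|\phi_L(x)-\phi_L(y)\|\le\delta$ satisfies $\|x-y\|\le\varepsilon$. -/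

import Mathlib

open MeasureTheory Metric Set
open scoped NNReal ENNReal

lemma ennreal_zero_of_seq (a C : ℝ≥0∞) (hC : C ≠ ⊤)
    (h : ∀ m : ℕ, a ≤ C * ENNReal.ofReal (1 / (m + 1))) : a = 0 := by
  have ht : Filter.Tendsto (fun m : ℕ => C * ENNReal.ofReal (1 / (m + 1)))
      Filter.atTop (nhds 0) := by
    have h1 : Filter.Tendsto (fun m : ℕ => ENNReal.ofReal (1 / (m + 1)))
        Filter.atTop (nhds 0) := by
      rw [show (0 : ℝ≥0∞) = ENNReal.ofReal 0 by simp]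
      exact (ENNReal.continuous_ofReal.tendsto 0).comp tendsto_one_div_add_atTop_nhds_zero_nat
    simpa using ENNReal.Tendsto.const_mul h1 (Or.inr hC)
  exact le_antisymm (ge_of_tendsto' ht h) (zero_le)

lemma slab_measure_le (N : ℕ) (R : ℝ) (hR : 0 < R) (w : EuclideanSpace ℝ (Fin N))
    (hw : w ≠ 0) (c r : ℝ) (hr : 0 ≤ r) :
    volume ({v : EuclideanSpace ℝ (Fin N) | |(inner ℝ v w : ℝ) - c| ≤ r} ∩ closedBall 0 R)
      ≤ volume (closedBall (0 : EuclideanSpace ℝ (Fin N)) (7 * R)) *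
        ENNReal.ofReal (r / (R * ‖w‖)) := by
  have hwn : 0 < ‖w‖ := norm_pos_iff.mpr hw
  set C := volume (closedBall (0 : EuclideanSpace ℝ (Fin N)) (7 * R)) with hCdef
  have hC : C ≠ ⊤ := measure_closedBall_lt_top.ne
  have main2 : ∀ r' : ℝ, 0 < r' →
      volume ({v : EuclideanSpace ℝ (Fin N) | |(inner ℝ v w : ℝ) - c| ≤ r'} ∩ closedBall 0 R)
        ≤ C * ENNReal.ofReal (r' / (R * ‖w‖)) := by
    intro r' hr'
    rcases le_or_gt r' (R * ‖w‖) with hr'le | hgt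
    · set A := {v : EuclideanSpace ℝ (Fin N) | |(inner ℝ v w : ℝ) - c| ≤ r'} ∩ closedBall 0 R
        with hA
      have hAclosed : IsClosed A := by
        refine IsClosed.inter (isClosed_le ?_ continuous_const) isClosed_closedBall
        exact ((Continuous.inner continuous_id continuous_const).sub continuous_const).abs
      set u := ‖w‖⁻¹ • w with hu
      have huw : (inner ℝ u w : ℝ) = ‖w‖ := by
        rw [hu, real_inner_smul_left, real_inner_self_eq_norm_mul_norm]
        field_simp
      have hun : ‖u‖ = 1 := by
        rw [hu, norm_smul, norm_inv, norm_norm]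
        field_simp
      set M := ⌈R * ‖w‖ / r'⌉₊ with hM
      have hMpos : 0 < M := Nat.ceil_pos.mpr (by positivity)
      have hMge : R * ‖w‖ / r' ≤ (M : ℝ) := Nat.le_ceil _
      have hMle : (M : ℝ) ≤ R * ‖w‖ / r' + 1 := (Nat.ceil_lt_add_one (by positivity)).le
      set T : ℕ → EuclideanSpace ℝ (Fin N) := fun j => ((3 * r' * j) / ‖w‖) • u with hT
      set B : ℕ → Set (EuclideanSpace ℝ (Fin N)) := fun j => (fun v => -T j + v) ⁻¹' A with hB
      have hBvol : ∀ j, volume (B j) = volume A := fun j =>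
        measure_preimage_add volume (-T j) A
      have hTnorm : ∀ j : ℕ, ‖T j‖ = 3 * r' * j / ‖w‖ := by
        intro j
        rw [hT]
        simp only [norm_smul, hun, mul_one, Real.norm_eq_abs]
        rw [abs_of_nonneg (by positivity)]
      have hTinner : ∀ j : ℕ, (inner ℝ (T j) w : ℝ) = 3 * r' * j := by
        intro j
        rw [hT]
        simp only [real_inner_smul_left, huw]
        field_simp
      have hBsub : ∀ j < M, B j ⊆ closedBall 0 (7 * R) := by
        intro j hj v hv
        have h1 : -T j + v ∈ closedBall (0 : EuclideanSpace ℝ (Fin N)) R := hv.2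
        rw [mem_closedBall_zero_iff] at h1 ⊢
        have h2 : ‖v‖ ≤ R + ‖T j‖ := by
          calc ‖v‖ = ‖(-T j + v) + T j‖ := by rw [neg_add_cancel_comm]
          _ ≤ ‖-T j + v‖ + ‖T j‖ := norm_add_le _ _
          _ ≤ R + ‖T j‖ := by linarith
        have h6 : r' / ‖w‖ ≤ R := by
          rw [div_le_iff₀ hwn]; linarith
        have h3 : ‖T j‖ ≤ 6 * R := by
          rw [hTnorm j, div_le_iff₀ hwn]
          have hj' : (j : ℝ) ≤ (M : ℝ) := by exact_mod_cast hj.le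
          have e : r' * (R * ‖w‖ / r') = R * ‖w‖ := by field_simp
          nlinarith [mul_le_mul_of_nonneg_left (hj'.trans hMle)
            (show (0:ℝ) ≤ 3 * r' by positivity), e, hr'.le, hr'le]
        linarith
      have hBdisj : Set.PairwiseDisjoint ↑(Finset.range M) B := by
        intro i _ j _ hij
        simp only [Function.onFun]
        rw [Set.disjoint_left]
        intro v hvi hvj
        have h1 : |(inner ℝ (-T i + v) w : ℝ) - c| ≤ r' := hvi.1
        have h2 : |(inner ℝ (-T j + v) w : ℝ) - c| ≤ r' := hvj.1
        rw [inner_add_left, inner_neg_left, hTinner] at h1 h2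
        have hij2 : (i:ℤ) ≠ (j:ℤ) := by exact_mod_cast hij
        have h3 : (1:ℝ) ≤ |(i:ℝ) - (j:ℝ)| := by
          have h4 : (1:ℤ) ≤ |(i:ℤ) - (j:ℤ)| := Int.one_le_abs (sub_ne_zero.mpr hij2)
          have h5 : ((1:ℤ):ℝ) ≤ ((|(i:ℤ) - (j:ℤ)| : ℤ) : ℝ) := by exact_mod_cast h4
          rw [Int.cast_abs] at h5
          push_cast at h5
          exact h5
        have habs : |(3:ℝ) * r' * i - 3 * r' * j| = (3 * r') * |(i:ℝ) - j| := by
          rw [show (3:ℝ) * r' * i - 3 * r' * j = (3 * r') * ((i:ℝ) - j) by ring,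
            abs_mul, abs_of_nonneg (show (0:ℝ) ≤ 3 * r' by positivity)]
        have hsep : 3 * r' ≤ |(3:ℝ) * r' * i - 3 * r' * j| := by
          rw [habs]
          nlinarith [h3, hr'.le]
        rw [abs_le] at h1 h2
        rcases le_abs.mp hsep with h | h
        · linarith [h1.1, h1.2, h2.1, h2.2]
        · linarith [h1.1, h1.2, h2.1, h2.2]
      have hsum : (M : ℝ≥0∞) * volume A ≤ C := by
        have hAm : MeasurableSet A := hAclosed.measurableSet
        have hBm : ∀ j ∈ Finset.range M, MeasurableSet (B j) := fun j _ =>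
          hAm.preimage (measurable_const_add _)
        have heq := measure_biUnion_finset hBdisj hBm (μ := volume)
        have hle : volume (⋃ j ∈ Finset.range M, B j) ≤ C := by
          apply measure_mono
          intro v hv
          simp only [Set.mem_iUnion] at hv
          obtain ⟨j, hj, hvj⟩ := hv
          exact hBsub j (Finset.mem_range.mp hj) hvj
        calc (M : ℝ≥0∞) * volume A = ∑ _j ∈ Finset.range M, volume A := by
              simp [Finset.sum_const, nsmul_eq_mul]
        _ = ∑ j ∈ Finset.range M, volume (B j) := by
              apply Finset.sum_congr rfl
              intro j _
              exact (hBvol j).symm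
        _ = volume (⋃ j ∈ Finset.range M, B j) := heq.symm
        _ ≤ C := hle
      have hMne : (M : ℝ≥0∞) ≠ 0 := by exact_mod_cast hMpos.ne'
      have hMnetop : (M : ℝ≥0∞) ≠ ⊤ := ENNReal.natCast_ne_top M
      have h1 : volume A ≤ C / M := by
        rw [ENNReal.le_div_iff_mul_le (Or.inl hMne) (Or.inl hMnetop), mul_comm]
        exact hsum
      have h2 : C / (M : ℝ≥0∞) ≤ C * ENNReal.ofReal (r' / (R * ‖w‖)) := by
        rw [ENNReal.div_eq_inv_mul, mul_comm]
        apply mul_le_mul_right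
        have hrle : (M:ℝ)⁻¹ ≤ r' / (R * ‖w‖) := by
          have h0 : 0 < R * ‖w‖ / r' := by positivity
          have h5 := one_div_le_one_div_of_le h0 hMge
          rw [one_div, one_div_div] at h5
          exact h5
        calc ((M : ℝ≥0∞))⁻¹ = ENNReal.ofReal ((M:ℝ))⁻¹ := by
              rw [← ENNReal.ofReal_natCast M,
                ← ENNReal.ofReal_inv_of_pos (by exact_mod_cast hMpos)]
        _ ≤ ENNReal.ofReal (r' / (R * ‖w‖)) := ENNReal.ofReal_le_ofReal hrle
      exact h1.trans h2
    · calc volume ({v : EuclideanSpace ℝ (Fin N) | |(inner ℝ v w : ℝ) - c| ≤ r'} ∩ closedBall 0 R)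
          ≤ volume (closedBall (0 : EuclideanSpace ℝ (Fin N)) R) :=
            measure_mono Set.inter_subset_right
      _ ≤ C := measure_mono (closedBall_subset_closedBall (by linarith))
      _ = C * 1 := (mul_one C).symm
      _ ≤ C * ENNReal.ofReal (r' / (R * ‖w‖)) := by
          apply mul_le_mul_right
          rw [show (1:ℝ≥0∞) = ENNReal.ofReal 1 by simp]
          apply ENNReal.ofReal_le_ofReal
          rw [le_div_iff₀ (by positivity)]
          linarith
  rcases eq_or_lt_of_le hr with hr0 | hrpos
  · have key : volume ({v : EuclideanSpace ℝ (Fin N) | |(inner ℝ v w : ℝ) - c| ≤ r}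
        ∩ closedBall 0 R) = 0 := by
      apply ennreal_zero_of_seq _ (C * ENNReal.ofReal ((R * ‖w‖)⁻¹))
      · exact ENNReal.mul_ne_top hC ENNReal.ofReal_ne_top
      · intro m
        have hm : (0:ℝ) < 1 / (m + 1) := by positivity
        calc volume ({v : EuclideanSpace ℝ (Fin N) | |(inner ℝ v w : ℝ) - c| ≤ r}
              ∩ closedBall 0 R)
            ≤ volume ({v : EuclideanSpace ℝ (Fin N) | |(inner ℝ v w : ℝ) - c| ≤ 1/(m+1)}
              ∩ closedBall 0 R) := by
              apply measure_mono
              apply Set.inter_subset_inter_left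
              intro v hv
              have hv0 : |(inner ℝ v w : ℝ) - c| ≤ 0 := by rw [← hr0] at hv; exact hv
              exact hv0.trans hm.le
        _ ≤ C * ENNReal.ofReal ((1/(m+1)) / (R * ‖w‖)) := main2 _ hm
        _ = C * ENNReal.ofReal ((R * ‖w‖)⁻¹) * ENNReal.ofReal (1/(m+1)) := by
            rw [div_eq_mul_inv, mul_comm (1/((m:ℝ)+1)), ENNReal.ofReal_mul (by positivity),
              mul_assoc]
    rw [key]
    exact zero_le
  · exact main2 r hrpos

lemma euclidean_abs_coord_le {k : ℕ} (a : EuclideanSpace ℝ (Fin k)) (i : Fin k) :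
    |a i| ≤ ‖a‖ := by
  rw [EuclideanSpace.norm_eq]
  calc |a i| = √((a i)^2) := (Real.sqrt_sq_eq_abs _).symm
  _ ≤ √(∑ j, ‖a j‖^2) := by
      apply Real.sqrt_le_sqrt
      have h := Finset.single_le_sum (f := fun j => ‖a j‖^2)
        (fun j _ => by positivity) (Finset.mem_univ i)
      simpa [Real.norm_eq_abs, sq_abs] using h

lemma slice_zero (N k : ℕ)
    (X : Set (EuclideanSpace ℝ (Fin N))) (hH : μH[(k : ℝ)] X = 0)
    (ψ : EuclideanSpace ℝ (Fin N) → EuclideanSpace ℝ (Fin k)) (K : ℝ≥0)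
    (hψ : LipschitzOnWith K ψ X) (x : EuclideanSpace ℝ (Fin N))
    (ε : ℝ) (hε : 0 < ε) (R : ℝ) (hR : 0 < R) :
    volume ({l : Fin k → EuclideanSpace ℝ (Fin N) |
        ∃ y ∈ X, ε ≤ ‖x - y‖ ∧ ∀ i, (inner ℝ (l i) (x - y) : ℝ) = ψ y i - ψ x i}
      ∩ Set.pi Set.univ (fun _ => closedBall 0 R)) = 0 := by
  set S : Set (EuclideanSpace ℝ (Fin N)) := {y | y ∈ X ∧ ε ≤ ‖x - y‖} with hS
  have hHS : μH[(k:ℝ)] S = 0 :=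
    le_antisymm (hH ▸ measure_mono (fun y hy => hy.1)) (zero_le)
  set C := volume (closedBall (0 : EuclideanSpace ℝ (Fin N)) (7 * R)) with hCdef
  have hC : C ≠ ⊤ := measure_closedBall_lt_top.ne
  set c3 : ℝ := (R + K) / (R * ε) with hc3
  have hc30 : 0 ≤ c3 := by positivity
  set D : ℝ≥0∞ := (C * ENNReal.ofReal c3)^k with hD
  have hDtop : D ≠ ⊤ := by
    rw [hD]
    exact ENNReal.pow_ne_top (ENNReal.mul_ne_top hC ENNReal.ofReal_ne_top)
  apply ennreal_zero_of_seq _ D hDtop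
  intro m
  set η := ENNReal.ofReal (1 / (m + 1)) with hη
  have hηpos : 0 < η := by
    rw [hη]
    exact ENNReal.ofReal_pos.mpr (by positivity)
  -- extract a cover from the Hausdorff measure hypothesis
  rw [MeasureTheory.Measure.hausdorffMeasure_apply] at hHS
  have h1 : (⨅ (t : ℕ → Set (EuclideanSpace ℝ (Fin N))) (_ : S ⊆ ⋃ n, t n) (_ : ∀ n, EMetric.diam (t n) ≤ 1),
      ∑' n, ⨆ _ : (t n).Nonempty, EMetric.diam (t n) ^ (k:ℝ)) = 0 := by
    apply le_antisymm _ (zero_le)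
    refine le_trans ?_ hHS.le
    exact le_iSup₂ (f := fun (r : ℝ≥0∞) (_ : 0 < r) =>
      ⨅ (t : ℕ → Set (EuclideanSpace ℝ (Fin N))) (_ : S ⊆ ⋃ n, t n) (_ : ∀ n, EMetric.diam (t n) ≤ r),
        ∑' n, ⨆ _ : (t n).Nonempty, EMetric.diam (t n) ^ (k:ℝ)) 1 one_pos
  have h4 : (⨅ (t : ℕ → Set (EuclideanSpace ℝ (Fin N))) (_ : S ⊆ ⋃ n, t n) (_ : ∀ n, EMetric.diam (t n) ≤ 1),
      ∑' n, ⨆ _ : (t n).Nonempty, EMetric.diam (t n) ^ (k:ℝ)) < η := by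
    rw [h1]; exact hηpos
  rw [iInf_lt_iff] at h4
  obtain ⟨t, h4⟩ := h4
  rw [iInf_lt_iff] at h4
  obtain ⟨hcov, h4⟩ := h4
  rw [iInf_lt_iff] at h4
  obtain ⟨hdiam, h4⟩ := h4
  -- the pieces of the bad set
  set Q : Set (Fin k → EuclideanSpace ℝ (Fin N)) := Set.pi Set.univ (fun _ => closedBall 0 R) with hQ
  set F : ℕ → Set (Fin k → EuclideanSpace ℝ (Fin N)) := fun n =>
    {l | ∃ y ∈ t n ∩ S, ∀ i, (inner ℝ (l i) (x - y) : ℝ) = ψ y i - ψ x i} ∩ Q with hF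
  have key : ∀ n, volume (F n) ≤
      D * (⨆ _ : (t n).Nonempty, EMetric.diam (t n) ^ (k:ℝ)) := by
    intro n
    by_cases hne : (t n ∩ S).Nonempty
    · obtain ⟨yn, hyn⟩ := hne
      have hynX : yn ∈ X := hyn.2.1
      have hynS : ε ≤ ‖x - yn‖ := hyn.2.2
      have hwne : x - yn ≠ 0 := by
        intro h
        rw [h, norm_zero] at hynS
        linarith
      have hwn : 0 < ‖x - yn‖ := norm_pos_iff.mpr hwne
      have hdn : EMetric.diam (t n) ≤ 1 := hdiam n
      have hdtop : EMetric.diam (t n) ≠ ⊤ := (hdn.trans_lt ENNReal.one_lt_top).ne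
      set ρ : ℝ := (EMetric.diam (t n)).toReal with hρ
      have hρ0 : 0 ≤ ρ := ENNReal.toReal_nonneg
      have hsub : F n ⊆ Set.pi Set.univ (fun i =>
          {v : EuclideanSpace ℝ (Fin N) | |(inner ℝ v (x - yn) : ℝ) - (ψ yn i - ψ x i)| ≤ (R + K) * ρ}
            ∩ closedBall 0 R) := by
        rintro l ⟨⟨y, hy, hcond⟩, hlQ⟩ i _
        have hyX : y ∈ X := hy.2.1
        have hdist : ‖y - yn‖ ≤ ρ := by
          rw [← dist_eq_norm, dist_edist]
          exact ENNReal.toReal_mono hdtop (EMetric.edist_le_diam_of_mem hy.1 hyn.1)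
        have hli : ‖l i‖ ≤ R := by
          have := hlQ i (Set.mem_univ i)
          rwa [mem_closedBall_zero_iff] at this
        refine ⟨?_, by simpa [mem_closedBall_zero_iff] using hli⟩
        have e1 : (inner ℝ (l i) (x - yn) : ℝ) - (ψ yn i - ψ x i)
            = (inner ℝ (l i) (y - yn) : ℝ) + (ψ y - ψ yn) i := by
          have e2 : (x - yn) = (x - y) + (y - yn) := by abel
          rw [e2, inner_add_right, hcond i, PiLp.sub_apply]
          ring
        show |(inner ℝ (l i) (x - yn) : ℝ) - (ψ yn i - ψ x i)| ≤ (R + K) * ρ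
        rw [e1]
        calc |(inner ℝ (l i) (y - yn) : ℝ) + (ψ y - ψ yn) i|
            ≤ |(inner ℝ (l i) (y - yn) : ℝ)| + |(ψ y - ψ yn) i| := abs_add_le _ _
        _ ≤ ‖l i‖ * ‖y - yn‖ + ‖ψ y - ψ yn‖ := by
            gcongr
            · exact abs_real_inner_le_norm _ _
            · exact euclidean_abs_coord_le _ _
        _ ≤ R * ρ + K * ρ := by
            gcongr
            have := hψ.dist_le_mul y hyX yn hynX
            rw [dist_eq_norm, dist_eq_norm] at this
            calc ‖ψ y - ψ yn‖ ≤ K * ‖y - yn‖ := this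
            _ ≤ K * ρ := by
                apply mul_le_mul_of_nonneg_left hdist (by positivity)
        _ = (R + K) * ρ := by ring
      have hbound : volume (F n) ≤ D * (ENNReal.ofReal ρ)^k := by
        calc volume (F n) ≤ volume (Set.pi Set.univ (fun i =>
            {v : EuclideanSpace ℝ (Fin N) | |(inner ℝ v (x - yn) : ℝ) - (ψ yn i - ψ x i)| ≤ (R + K) * ρ}
              ∩ closedBall 0 R)) := measure_mono hsub
        _ = ∏ i, volume ({v : EuclideanSpace ℝ (Fin N) | |(inner ℝ v (x - yn) : ℝ) - (ψ yn i - ψ x i)| ≤ (R + K) * ρ}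
              ∩ closedBall 0 R) := volume_pi_pi _
        _ ≤ ∏ _i : Fin k, (C * ENNReal.ofReal c3 * ENNReal.ofReal ρ) := by
            apply Finset.prod_le_prod'
            intro i _
            calc volume ({v : EuclideanSpace ℝ (Fin N) | |(inner ℝ v (x - yn) : ℝ) - (ψ yn i - ψ x i)| ≤ (R + K) * ρ}
                  ∩ closedBall 0 R)
                ≤ C * ENNReal.ofReal (((R + K) * ρ) / (R * ‖x - yn‖)) :=
                  slab_measure_le N R hR (x - yn) hwne _ _ (by positivity)
            _ ≤ C * ENNReal.ofReal (c3 * ρ) := by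
                apply mul_le_mul_right
                apply ENNReal.ofReal_le_ofReal
                have h5 : ((R + K) * ρ) / (R * ‖x - yn‖) ≤ ((R + K) * ρ) / (R * ε) := by
                  gcongr
                refine h5.trans (le_of_eq ?_)
                rw [hc3]
                ring
            _ = C * ENNReal.ofReal c3 * ENNReal.ofReal ρ := by
                rw [ENNReal.ofReal_mul hc30, mul_assoc]
        _ = (C * ENNReal.ofReal c3 * ENNReal.ofReal ρ)^k := by
            rw [Finset.prod_const, Finset.card_univ, Fintype.card_fin]
        _ = D * (ENNReal.ofReal ρ)^k := by rw [hD, mul_pow]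
      have hguard : (⨆ _ : (t n).Nonempty, EMetric.diam (t n) ^ (k:ℝ))
          = EMetric.diam (t n) ^ (k:ℝ) := iSup_pos ⟨yn, hyn.1⟩
      rw [hguard]
      refine hbound.trans (le_of_eq ?_)
      congr 1
      rw [hρ, ENNReal.ofReal_toReal hdtop, ← ENNReal.rpow_natCast]
    · have hFn : F n = ∅ := by
        rw [hF]
        ext l
        simp only [Set.mem_inter_iff, Set.mem_setOf_eq, Set.mem_empty_iff_false, iff_false]
        rintro ⟨⟨y, hy, _⟩, _⟩
        exact hne ⟨y, hy⟩
      rw [hFn]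
      simp
  -- put the pieces together
  have hcover : {l : Fin k → EuclideanSpace ℝ (Fin N) |
        ∃ y ∈ X, ε ≤ ‖x - y‖ ∧ ∀ i, (inner ℝ (l i) (x - y) : ℝ) = ψ y i - ψ x i} ∩ Q
      ⊆ ⋃ n, F n := by
    rintro l ⟨⟨y, hyX, hyε, hcond⟩, hlQ⟩
    have hyS : y ∈ S := ⟨hyX, hyε⟩
    obtain ⟨n, hn⟩ := Set.mem_iUnion.mp (hcov hyS)
    exact Set.mem_iUnion.mpr ⟨n, ⟨⟨y, ⟨hn, hyS⟩, hcond⟩, hlQ⟩⟩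
  calc volume ({l : Fin k → EuclideanSpace ℝ (Fin N) |
        ∃ y ∈ X, ε ≤ ‖x - y‖ ∧ ∀ i, (inner ℝ (l i) (x - y) : ℝ) = ψ y i - ψ x i} ∩ Q)
      ≤ volume (⋃ n, F n) := measure_mono hcover
  _ ≤ ∑' n, volume (F n) := measure_iUnion_le _
  _ ≤ ∑' n, D * (⨆ _ : (t n).Nonempty, EMetric.diam (t n) ^ (k:ℝ)) :=
      ENNReal.tsum_le_tsum key
  _ = D * ∑' n, (⨆ _ : (t n).Nonempty, EMetric.diam (t n) ^ (k:ℝ)) :=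
      ENNReal.tsum_mul_left
  _ ≤ D * η := mul_le_mul_right h4.le _

/-- Theorem: continuity of the inverse of almost-surely injective linear
perturbations of Lipschitz maps.  If `μ` is a finite Borel measure with compact support
`X ⊆ ℝ^N` with `H^k(X) = 0` and `φ : X → ℝ^k` is Lipschitz, then for Lebesgue-almost every
linear map `L : ℝ^N → ℝ^k` (parametrized by the `k` vectors `l i` defining it via
`L x = (⟪l 1, x⟫, …, ⟪l k, x⟫)`) there is a full-measure Borel set `X_L ⊆ X` on which
`φ_L = φ + L` is injective, and whose inverse is continuous in the stated `ε`-`δ` sense. -/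
theorem as_injective_with_continuous_inverse (N k : ℕ) (hk : 1 ≤ k) (hkN : k ≤ N)
    (μ : Measure (EuclideanSpace ℝ (Fin N))) [IsFiniteMeasure μ]
    (X : Set (EuclideanSpace ℝ (Fin N))) (hX : IsCompact X) (hμX : μ Xᶜ = 0)
    (hH : μH[(k : ℝ)] X = 0)
    (φ : EuclideanSpace ℝ (Fin N) → EuclideanSpace ℝ (Fin k))
    (hφ : ∃ K : ℝ≥0, LipschitzOnWith K φ X) :
    ∀ᵐ l ∂(volume : Measure (Fin k → EuclideanSpace ℝ (Fin N))),
      ∃ X_L, X_L ⊆ X ∧ MeasurableSet X_L ∧ μ X_Lᶜ = 0 ∧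
        Set.InjOn
          (fun x => φ x + show EuclideanSpace ℝ (Fin k) from WithLp.toLp 2 fun i => (inner ℝ (l i) x : ℝ)) X_L ∧
        ∀ x ∈ X_L, ∀ ε > (0 : ℝ), ∃ δ > (0 : ℝ), ∀ y ∈ X,
          ‖(φ x + show EuclideanSpace ℝ (Fin k) from WithLp.toLp 2 fun i => (inner ℝ (l i) x : ℝ)) -
            (φ y + show EuclideanSpace ℝ (Fin k) from WithLp.toLp 2 fun i => (inner ℝ (l i) y : ℝ))‖ ≤ δ →
            ‖x - y‖ ≤ ε := by
  classical
  obtain ⟨K, hφK⟩ := hφ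
  -- a globally continuous function agreeing with φ on X
  have hcoord : LipschitzOnWith K (fun v (i : Fin k) => φ v i) X := by
    apply LipschitzOnWith.of_dist_le_mul
    intro a ha b hb
    rw [dist_pi_le_iff (by positivity)]
    intro i
    rw [Real.dist_eq]
    calc |φ a i - φ b i| = |(φ a - φ b) i| := by rw [PiLp.sub_apply]
    _ ≤ ‖φ a - φ b‖ := euclidean_abs_coord_le _ _
    _ = dist (φ a) (φ b) := (dist_eq_norm _ _).symm
    _ ≤ K * dist a b := hφK.dist_le_mul a ha b hb
  obtain ⟨g, hg, hgeq⟩ := hcoord.extend_pi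
  set ψ : EuclideanSpace ℝ (Fin N) → EuclideanSpace ℝ (Fin k) :=
    fun v => (WithLp.equiv 2 (Fin k → ℝ)).symm (g v) with hψdef
  have hψeq : ∀ v ∈ X, ψ v = φ v := by
    intro v hv
    ext i
    show g v i = φ v i
    rw [← hgeq hv]
  have hψcont : Continuous ψ :=
    (PiLp.continuous_toLp 2 (fun _ : Fin k => ℝ)).comp hg.continuous
  have hψlip : LipschitzOnWith K ψ X := by
    apply LipschitzOnWith.of_dist_le_mul
    intro a ha b hb
    rw [show ψ a = φ a from hψeq a ha, show ψ b = φ b from hψeq b hb]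
    exact hφK.dist_le_mul a ha b hb
  -- the exceptional sets
  set G : (Fin k → EuclideanSpace ℝ (Fin N)) → ℕ → Set (EuclideanSpace ℝ (Fin N)) :=
    fun l n => {x | x ∈ X ∧ ∃ y ∈ X, 1/(n+1) ≤ ‖x - y‖ ∧
      ∀ i, (inner ℝ (l i) (x - y) : ℝ) = ψ y i - ψ x i} with hG
  set Q : ℕ → Set (Fin k → EuclideanSpace ℝ (Fin N)) :=
    fun m => Set.pi Set.univ (fun _ => closedBall 0 ((m:ℝ)+1)) with hQdef
  have hQmeas : ∀ m, MeasurableSet (Q m) :=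
    fun m => MeasurableSet.univ_pi (fun i => measurableSet_closedBall)
  -- Step 2 : Fubini
  have step2 : ∀ (m n : ℕ), ∀ᵐ l ∂(volume.restrict (Q m)), μ (G l n) = 0 := by
    intro m n
    set Bad : Set ((Fin k → EuclideanSpace ℝ (Fin N)) × EuclideanSpace ℝ (Fin N)) :=
      {p | p.2 ∈ X ∧ ∃ y ∈ X, 1/(n+1) ≤ ‖p.2 - y‖ ∧
        ∀ i, (inner ℝ (p.1 i) (p.2 - y) : ℝ) = ψ y i - ψ p.2 i} with hBad
    have hXc : IsClosed X := hX.isClosed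
    have hBadclosed : IsClosed Bad := by
      haveI : CompactSpace ↥X := isCompact_iff_compactSpace.mp hX
      set D : Set (↥X × ((Fin k → EuclideanSpace ℝ (Fin N)) × EuclideanSpace ℝ (Fin N))) :=
        {q | q.2.2 ∈ X ∧ 1/(n+1) ≤ ‖q.2.2 - (q.1 : EuclideanSpace ℝ (Fin N))‖ ∧
          ∀ i, (inner ℝ (q.2.1 i) (q.2.2 - (q.1 : EuclideanSpace ℝ (Fin N))) : ℝ)
            = ψ (q.1 : EuclideanSpace ℝ (Fin N)) i - ψ q.2.2 i} with hD
    
      have hDc : IsClosed D := by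
        have hcy : Continuous fun q : ↥X × ((Fin k → EuclideanSpace ℝ (Fin N)) ×
            EuclideanSpace ℝ (Fin N)) => q.2.2 - (q.1 : EuclideanSpace ℝ (Fin N)) :=
          continuous_snd.snd.sub (continuous_subtype_val.comp continuous_fst)
        refine IsClosed.inter (hXc.preimage continuous_snd.snd) (IsClosed.inter ?_ ?_)
        · exact isClosed_le continuous_const hcy.norm
        · have hclosed : IsClosed (⋂ i : Fin k,
              {q : ↥X × ((Fin k → EuclideanSpace ℝ (Fin N)) × EuclideanSpace ℝ (Fin N)) |
                (inner ℝ (q.2.1 i) (q.2.2 - (q.1 : EuclideanSpace ℝ (Fin N))) : ℝ)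
                  = ψ (q.1 : EuclideanSpace ℝ (Fin N)) i - ψ q.2.2 i}) := by
            apply isClosed_iInter
            intro i
            apply isClosed_eq
            · exact Continuous.inner ((continuous_apply i).comp continuous_snd.fst) hcy
            · apply Continuous.sub
              · exact (PiLp.continuous_apply 2 (fun _ : Fin k => ℝ) i).comp
                  (hψcont.comp (continuous_subtype_val.comp continuous_fst))
              · exact (PiLp.continuous_apply 2 (fun _ : Fin k => ℝ) i).comp (hψcont.comp continuous_snd.snd)
          rw [← Set.setOf_forall] at hclosed
          exact hclosed
      have him : Bad = Prod.snd '' D := by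
        ext p
        constructor
        · rintro ⟨hpX, y, hyX, hyn, hcond⟩
          exact ⟨(⟨y, hyX⟩, p), ⟨hpX, hyn, hcond⟩, rfl⟩
        · rintro ⟨⟨y, q⟩, hq, rfl⟩
          exact ⟨hq.1, y, y.2, hq.2.1, hq.2.2⟩
      rw [him]
      exact isClosedMap_snd_of_compactSpace D hDc
    have hBadm : MeasurableSet Bad := hBadclosed.measurableSet
    have hprodzero : ((volume.restrict (Q m)).prod μ) Bad = 0 := by
      rw [Measure.prod_apply_symm hBadm]
      have hzero : ∀ x : EuclideanSpace ℝ (Fin N),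
          (volume.restrict (Q m)) ((fun l => (l, x)) ⁻¹' Bad) = 0 := by
        intro x
        by_cases hxX : x ∈ X
        · have hpre : (fun l : Fin k → EuclideanSpace ℝ (Fin N) => (l, x)) ⁻¹' Bad
              = {l : Fin k → EuclideanSpace ℝ (Fin N) | ∃ y ∈ X, 1/(n+1) ≤ ‖x - y‖ ∧
                  ∀ i, (inner ℝ (l i) (x - y) : ℝ) = ψ y i - ψ x i} := by
            ext l
            simp only [hBad, Set.mem_preimage, Set.mem_setOf_eq, hxX, true_and]
          rw [Measure.restrict_apply' (hQmeas m), hpre]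
          exact slice_zero N k X hH ψ K hψlip x _ (by positivity) _ (by positivity)
        · have hemp : (fun l : Fin k → EuclideanSpace ℝ (Fin N) => (l, x)) ⁻¹' Bad = ∅ := by
            ext l
            simp only [hBad, Set.mem_preimage, Set.mem_setOf_eq, hxX, false_and,
              Set.mem_empty_iff_false]
          rw [hemp]
          simp
      simp only [hzero, lintegral_zero]
    have hae := (Measure.measure_prod_null hBadm).mp hprodzero
    refine hae.mono ?_
    intro l hl
    have hGeq : G l n = Prod.mk l ⁻¹' Bad := by
      ext x
      simp only [hG, hBad, Set.mem_setOf_eq, Set.mem_preimage]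
    rw [hGeq]
    exact hl
  -- Step 3 : combine over all cubes
  have step3 : ∀ᵐ l ∂(volume : Measure (Fin k → EuclideanSpace ℝ (Fin N))),
      ∀ n, μ (G l n) = 0 := by
    rw [ae_iff]
    set B := {l : Fin k → EuclideanSpace ℝ (Fin N) | ¬ ∀ n, μ (G l n) = 0} with hBdef
    have hBm : ∀ m : ℕ, volume (B ∩ Q m) = 0 := by
      intro m
      have h := ae_all_iff.mpr (fun n => step2 m n)
      rw [ae_iff] at h
      rw [← Measure.restrict_apply' (hQmeas m)]
      exact h
    have hcoverQ : B ⊆ ⋃ m : ℕ, (B ∩ Q m) := by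
      intro l hl
      set b := Finset.univ.sup (fun i : Fin k => ⌈‖l i‖⌉₊) with hb
      refine Set.mem_iUnion.mpr ⟨b, hl, ?_⟩
      intro i _
      rw [mem_closedBall_zero_iff]
      calc ‖l i‖ ≤ (⌈‖l i‖⌉₊ : ℝ) := Nat.le_ceil _
      _ ≤ (b : ℝ) := by
          have hle : ⌈‖l i‖⌉₊ ≤ b := Finset.le_sup (f := fun i : Fin k => ⌈‖l i‖⌉₊)
            (Finset.mem_univ i)
          exact_mod_cast hle
      _ ≤ (b : ℝ) + 1 := by linarith
    have : volume B = 0 := by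
      refine le_antisymm ?_ (zero_le)
      calc volume B ≤ volume (⋃ m : ℕ, (B ∩ Q m)) := measure_mono hcoverQ
      _ ≤ ∑' m, volume (B ∩ Q m) := measure_iUnion_le _
      _ = 0 := by simp [hBm]
    exact this
  -- Final step
  refine step3.mono ?_
  intro l hl
  -- bridge between the two formulations
  have hbridge : ∀ x ∈ X, ∀ y ∈ X,
      ((φ x + show EuclideanSpace ℝ (Fin k) from WithLp.toLp 2 fun i => (inner ℝ (l i) x : ℝ))
        = (φ y + show EuclideanSpace ℝ (Fin k) from WithLp.toLp 2 fun i => (inner ℝ (l i) y : ℝ)))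
      ↔ ∀ i, (inner ℝ (l i) (x - y) : ℝ) = ψ y i - ψ x i := by
    intro x hx y hy
    rw [← hψeq x hx, ← hψeq y hy, WithLp.ext_iff, funext_iff]
    apply forall_congr'
    intro i
    simp only [WithLp.ofLp_add, Pi.add_apply, PiLp.toLp_apply]
    rw [inner_sub_right]
    constructor <;> intro h <;> linarith
  have hGcomp : ∀ n, IsCompact (G l n) := by
    intro n
    have hCn : IsCompact ((X ×ˢ X) ∩
        {p : EuclideanSpace ℝ (Fin N) × EuclideanSpace ℝ (Fin N) |
          1/(n+1) ≤ ‖p.1 - p.2‖ ∧ ∀ i, (inner ℝ (l i) (p.1 - p.2) : ℝ) = ψ p.2 i - ψ p.1 i}) := by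
      apply (hX.prod hX).inter_right
      apply IsClosed.inter
      · exact isClosed_le continuous_const (continuous_fst.sub continuous_snd).norm
      · have hclosed : IsClosed (⋂ i : Fin k,
            {p : EuclideanSpace ℝ (Fin N) × EuclideanSpace ℝ (Fin N) |
              (inner ℝ (l i) (p.1 - p.2) : ℝ) = ψ p.2 i - ψ p.1 i}) := by
          apply isClosed_iInter
          intro i
          apply isClosed_eq
          · exact Continuous.inner continuous_const (continuous_fst.sub continuous_snd)
          · exact ((PiLp.continuous_apply 2 (fun _ : Fin k => ℝ) i).comp (hψcont.comp continuous_snd)).sub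
              ((PiLp.continuous_apply 2 (fun _ : Fin k => ℝ) i).comp (hψcont.comp continuous_fst))
        rw [← Set.setOf_forall] at hclosed
        exact hclosed
    have hGim : G l n = Prod.fst '' ((X ×ˢ X) ∩
        {p : EuclideanSpace ℝ (Fin N) × EuclideanSpace ℝ (Fin N) |
          1/(n+1) ≤ ‖p.1 - p.2‖ ∧ ∀ i, (inner ℝ (l i) (p.1 - p.2) : ℝ) = ψ p.2 i - ψ p.1 i}) := by
      ext x
      constructor
      · rintro ⟨hx, y, hy, h1, h2⟩
        exact ⟨(x, y), ⟨⟨hx, hy⟩, h1, h2⟩, rfl⟩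
      · rintro ⟨⟨x', y⟩, ⟨⟨hx, hy⟩, h1, h2⟩, rfl⟩
        exact ⟨hx, y, hy, h1, h2⟩
    rw [hGim]
    exact hCn.image continuous_fst
  set U := ⋃ n, G l n with hU
  refine ⟨X \ U, Set.diff_subset, ?_, ?_, ?_, ?_⟩
  · exact hX.isClosed.measurableSet.diff
      (MeasurableSet.iUnion fun n => (hGcomp n).isClosed.measurableSet)
  · have hcompl : (X \ U)ᶜ = Xᶜ ∪ U := by
      rw [Set.diff_eq, Set.compl_inter, compl_compl]
    refine le_antisymm ?_ (zero_le)
    rw [hcompl]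
    calc μ (Xᶜ ∪ U) ≤ μ Xᶜ + μ U := measure_union_le _ _
    _ ≤ 0 + ∑' n, μ (G l n) := add_le_add hμX.le (measure_iUnion_le _)
    _ = 0 := by simp [hl]
  · intro a ha b hb heq
    by_contra hne
    have hpos : 0 < ‖a - b‖ := by
      rw [norm_pos_iff, sub_ne_zero]
      exact hne
    obtain ⟨n, hn⟩ := exists_nat_one_div_lt hpos
    have hmem : a ∈ G l n := ⟨ha.1, b, hb.1, hn.le, (hbridge a ha.1 b hb.1).mp heq⟩
    exact ha.2 (Set.mem_iUnion.mpr ⟨n, hmem⟩)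
  · intro x hx ε hε
    have hxX : x ∈ X := hx.1
    set Φψ : EuclideanSpace ℝ (Fin N) → EuclideanSpace ℝ (Fin k) :=
      fun z => ψ z + show EuclideanSpace ℝ (Fin k) from WithLp.toLp 2 fun i => (inner ℝ (l i) z : ℝ) with hΦψ
    have hΦg : ∀ z ∈ X,
        (φ z + show EuclideanSpace ℝ (Fin k) from WithLp.toLp 2 fun i => (inner ℝ (l i) z : ℝ)) = Φψ z := by
      intro z hz
      rw [hΦψ]
      simp only
      rw [hψeq z hz]
    have hinnercont : Continuous fun z : EuclideanSpace ℝ (Fin N) =>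
        (show EuclideanSpace ℝ (Fin k) from WithLp.toLp 2 fun i => (inner ℝ (l i) z : ℝ)) :=
      (PiLp.continuous_toLp 2 fun _ : Fin k => ℝ).comp
        (continuous_pi (fun i => Continuous.inner continuous_const continuous_id))
    have hΦcont : Continuous Φψ := hψcont.add hinnercont
    set T := X ∩ {y | ε ≤ ‖x - y‖} with hTdef
    by_cases hTne : T.Nonempty
    · have hTcomp : IsCompact T := hX.inter_right
        (isClosed_le continuous_const (continuous_const.sub continuous_id).norm)
      have hcont : ContinuousOn (fun y => ‖Φψ x - Φψ y‖) T :=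
        (Continuous.norm (continuous_const.sub hΦcont)).continuousOn
      obtain ⟨y0, hy0, hmin⟩ := hTcomp.exists_isMinOn hTne hcont
      set m := ‖Φψ x - Φψ y0‖ with hm
      have hm0 : 0 < m := by
        rcases (norm_nonneg (Φψ x - Φψ y0)).lt_or_eq with h | h
        · exact h
        · exfalso
          have heq0 : Φψ x = Φψ y0 := by
            rw [← sub_eq_zero, ← norm_eq_zero]
            exact h.symm
          have heqφ : (φ x + show EuclideanSpace ℝ (Fin k) from
                WithLp.toLp 2 fun i => (inner ℝ (l i) x : ℝ))
              = (φ y0 + show EuclideanSpace ℝ (Fin k) from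
                WithLp.toLp 2 fun i => (inner ℝ (l i) y0 : ℝ)) := by
            rw [hΦg x hxX, hΦg y0 hy0.1]
            exact heq0
          obtain ⟨n, hn⟩ := exists_nat_one_div_lt hε
          have hmem : x ∈ G l n := ⟨hxX, y0, hy0.1, le_trans hn.le hy0.2,
            (hbridge x hxX y0 hy0.1).mp heqφ⟩
          exact hx.2 (Set.mem_iUnion.mpr ⟨n, hmem⟩)
      refine ⟨m/2, by positivity, ?_⟩
      intro y hyX hnear
      by_contra hfar
      push_neg at hfar
      have hyT : y ∈ T := ⟨hyX, hfar.le⟩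
      have hmy : m ≤ ‖Φψ x - Φψ y‖ := (isMinOn_iff.mp hmin) y hyT
      rw [hΦg x hxX, hΦg y hyX] at hnear
      have : m ≤ m/2 := le_trans hmy hnear
      linarith
    · refine ⟨1, one_pos, ?_⟩
      intro y hyX _
      by_contra hfar
      push_neg at hfar
      exact hTne ⟨y, hyX, hfar.le⟩
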